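/- Let Ω be a Polish space endowed with its Borel σ-algebra, and let T be a positive kernel operator on B_b(Ω) with associated kernel k. If T is strongly Feller, then there exists a positive measure μ ∈ M(Ω) such that for every x ∈ Ω the measure k(x,·) is absolutely continuous with respect to μ. -/

import Mathlib

open MeasureTheory Filter Topology
open scoped ENNReal NNReal

/-- The integral `∫ f dμ` of a function against a finite signed measure, defined via the
Jordan decomposition of `μ`. -/
noncomputable def sInt {Ω : Type*} [MeasurableSpace Ω] (μ : SignedMeasure Ω) (f : Ω → ℝ) : ℝ :=
  (∫ x, f x ∂μ.toJordanDecomposition.posPart) - ∫ x, f x ∂μ.toJordanDecomposition.negPart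

/-- `f` belongs to `B_b(Ω)`, i.e. `f` is a bounded measurable real-valued function. -/
def IsBddMeas {Ω : Type*} [MeasurableSpace Ω] (f : Ω → ℝ) : Prop :=
  Measurable f ∧ ∃ C : ℝ, ∀ x, |f x| ≤ C

/-- The total variation norm of a finite signed measure. -/
noncomputable def tvNorm {Ω : Type*} [MeasurableSpace Ω] (μ : SignedMeasure Ω) : ℝ :=
  (μ.totalVariation Set.univ).toReal

/-- A bounded kernel on `Ω`: `x ↦ k x` is a family of finite signed measures such that
`x ↦ k x A` is measurable for every measurable `A` and `sup_x |k x|(Ω) < ∞`. -/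
def IsBoundedKernel {Ω : Type*} [MeasurableSpace Ω] (k : Ω → SignedMeasure Ω) : Prop :=
  (∀ A : Set Ω, MeasurableSet A → Measurable fun x => k x A) ∧
    ∃ C : ℝ, ∀ x, tvNorm (k x) ≤ C

lemma signedMeasure_apply_jordan {Ω : Type*} [MeasurableSpace Ω] (s : SignedMeasure Ω)
    {A : Set Ω} (hA : MeasurableSet A) :
    s A = (s.toJordanDecomposition.posPart A).toReal -
      (s.toJordanDecomposition.negPart A).toReal := by
  conv_lhs => rw [← s.toSignedMeasure_toJordanDecomposition]
  rw [JordanDecomposition.toSignedMeasure, VectorMeasure.sub_apply,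
    Measure.toSignedMeasure_apply_measurable hA, Measure.toSignedMeasure_apply_measurable hA]
  rfl

lemma sInt_indicator {Ω : Type*} [MeasurableSpace Ω] (s : SignedMeasure Ω)
    {A : Set Ω} (hA : MeasurableSet A) :
    sInt s (A.indicator 1) = s A := by
  rw [sInt, integral_indicator_one hA, integral_indicator_one hA,
    signedMeasure_apply_jordan s hA]
  rfl

/-- Let `Ω` be a Polish space with its Borel `σ`-algebra and let `T` be a positive kernel
operator on `B_b(Ω)` with kernel `k`. If `T` is strongly Feller, then there exists a
positive measure `μ ∈ M(Ω)` such that `k (x, ·) ≪ μ` for every `x ∈ Ω`. -/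
theorem strongly_feller_kernel_absolutely_continuous
    {Ω : Type*} [TopologicalSpace Ω] [PolishSpace Ω] [MeasurableSpace Ω] [BorelSpace Ω]
    (k : Ω → SignedMeasure Ω)
    (hk : IsBoundedKernel k)
    (hkpos : ∀ (x : Ω) (A : Set Ω), MeasurableSet A → 0 ≤ k x A)
    (T : (Ω → ℝ) → Ω → ℝ)
    (hT : ∀ f : Ω → ℝ, IsBddMeas f → ∀ x, T f x = sInt (k x) f)
    -- `T` is strongly Feller:
    (hFeller : ∀ f : Ω → ℝ, IsBddMeas f → Continuous (T f)) :
    ∃ μ : SignedMeasure Ω, 0 ≤ μ ∧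
      ∀ (x : Ω) (A : Set Ω), MeasurableSet A → μ A = 0 → k x A = 0 := by
  by_cases hne : Nonempty Ω
  · set u : ℕ → Ω := TopologicalSpace.denseSeq Ω with hu
    have hdense : DenseRange u := TopologicalSpace.denseRange_denseSeq Ω
    set m : ℕ → Measure Ω := fun n => (k (u n)).totalVariation with hm
    have hmfin : ∀ n, m n Set.univ ≠ ⊤ := by
      intro n
      have : IsFiniteMeasure (m n) := by
        rw [hm]
        simp only [SignedMeasure.totalVariation]
        infer_instance
      exact measure_ne_top _ _
    set w : ℕ → ℝ≥0∞ := fun n => (2 : ℝ≥0∞)⁻¹ ^ (n + 1) * (m n Set.univ + 1)⁻¹ with hw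
    have hwne : ∀ n, w n ≠ 0 := by
      intro n
      rw [hw]
      refine mul_ne_zero (pow_ne_zero _ (by simp)) ?_
      simp only [ne_eq, ENNReal.inv_eq_zero]
      exact ENNReal.add_ne_top.mpr ⟨hmfin n, ENNReal.one_ne_top⟩
    set ν : Measure Ω := Measure.sum (fun n => w n • m n) with hν
    have hνapp : ∀ A : Set Ω, MeasurableSet A → ν A = ∑' n, w n * m n A := by
      intro A hA
      rw [hν, Measure.sum_apply _ hA]
      simp [Measure.smul_apply, smul_eq_mul]
    have hνfin : IsFiniteMeasure ν := by
      constructor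
      rw [hνapp Set.univ MeasurableSet.univ]
      have hle : ∀ n, w n * m n Set.univ ≤ (2 : ℝ≥0∞)⁻¹ ^ (n + 1) := by
        intro n
        rw [hw, mul_assoc]
        refine mul_le_of_le_one_right' ?_
        calc (m n Set.univ + 1)⁻¹ * m n Set.univ
            ≤ (m n Set.univ + 1)⁻¹ * (m n Set.univ + 1) := by
              exact mul_le_mul_right (le_add_right le_rfl) _
          _ = 1 := ENNReal.inv_mul_cancel (by simp)
              (ENNReal.add_ne_top.mpr ⟨hmfin n, ENNReal.one_ne_top⟩)
      calc ∑' n, w n * m n Set.univ ≤ ∑' n, (2 : ℝ≥0∞)⁻¹ ^ (n + 1) :=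
            ENNReal.tsum_le_tsum hle
        _ ≤ ∑' n : ℕ, (2 : ℝ≥0∞)⁻¹ ^ n := ENNReal.tsum_le_tsum fun n =>
            pow_le_pow_of_le_one (by simp) (by simp) (by omega)
        _ < ⊤ := by
            rw [ENNReal.tsum_geometric]
            simp [ENNReal.sub_eq_top_iff]
    refine ⟨ν.toSignedMeasure, ?_, ?_⟩
    · rw [VectorMeasure.le_iff]
      intro A hA
      rw [Measure.toSignedMeasure_apply_measurable hA]
      positivity
    · intro x A hA hμA
      rw [Measure.toSignedMeasure_apply_measurable hA] at hμA
      have hνA : ν A = 0 := by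
        have hfin : ν A ≠ ⊤ := measure_ne_top ν A
        exact (ENNReal.toReal_eq_zero_iff _).mp hμA |>.resolve_right hfin
      rw [hνapp A hA] at hνA
      have hmA : ∀ n, m n A = 0 := by
        intro n
        have := (ENNReal.tsum_eq_zero.mp hνA) n
        exact (mul_eq_zero.mp this).resolve_left (hwne n)
      -- k (u n) A = 0 for all n
      have hkn : ∀ n, k (u n) A = 0 := fun n =>
        SignedMeasure.null_of_totalVariation_zero _ (hmA n)
      -- use strong Feller
      set f : Ω → ℝ := A.indicator 1 with hf
      have hfbm : IsBddMeas f := by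
        refine ⟨measurable_one.indicator hA, 1, fun y => ?_⟩
        rw [hf]
        by_cases hy : y ∈ A <;> simp [Set.indicator_apply, hy]
      have hcont : Continuous (T f) := hFeller f hfbm
      have hTf : ∀ y, T f y = k y A := by
        intro y
        rw [hT f hfbm y, hf, sInt_indicator _ hA]
      have heq : T f = fun _ => (0 : ℝ) := by
        refine hcont.ext_on hdense continuous_const ?_
        rintro y ⟨n, rfl⟩
        rw [hTf, hkn]
      have := congrFun heq x
      rw [hTf] at this
      exact this
  · refine ⟨0, le_rfl, fun x => absurd ⟨x⟩ hne⟩
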